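/- For all integers n ≥ m ≥ 2, Γ((n+1)/2) / (Γ(m/2) · (n/2)^{(n−m+1)/2}) > √(2 e^{5/6} / 3) · e^{−(n−m+1)/2}. -/

import Mathlib

open Real

lemma gamma_sq_key {x : ℝ} (hx : 1/2 < x) :
    (x - 1/2) * Real.Gamma x ^ 2 ≤ Real.Gamma (x + 1/2) ^ 2 := by
  have h1 : (0:ℝ) < x - 1/2 := by linarith
  have h2 : (0:ℝ) < x + 1/2 := by linarith
  have h0 : (0:ℝ) < x := by linarith
  have hconv := Real.convexOn_log_Gamma.2 (Set.mem_Ioi.2 h1) (Set.mem_Ioi.2 h2)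
    (by norm_num : (0:ℝ) ≤ 1/2) (by norm_num : (0:ℝ) ≤ 1/2) (by norm_num)
  have hmid : (1/2 : ℝ) • (x - 1/2) + (1/2 : ℝ) • (x + 1/2) = x := by
    simp only [smul_eq_mul]; ring
  rw [hmid] at hconv
  simp only [Function.comp_apply, smul_eq_mul] at hconv
  have hG1 := Real.Gamma_pos_of_pos h1
  have hG2 := Real.Gamma_pos_of_pos h2
  have hG0 := Real.Gamma_pos_of_pos h0
  have hexp : Real.Gamma x ^ 2 ≤ Real.Gamma (x - 1/2) * Real.Gamma (x + 1/2) := by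
    have := Real.exp_le_exp.2 (by linarith : 2 * Real.log (Real.Gamma x) ≤
      Real.log (Real.Gamma (x - 1/2)) + Real.log (Real.Gamma (x + 1/2)))
    rwa [Real.exp_add, Real.exp_log hG1, Real.exp_log hG2, two_mul, Real.exp_add,
      Real.exp_log hG0, ← sq] at this
  have hfe : Real.Gamma (x + 1/2) = (x - 1/2) * Real.Gamma (x - 1/2) := by
    have := Real.Gamma_add_one (by positivity : x - 1/2 ≠ 0)
    rw [show x - 1/2 + 1 = x + 1/2 by ring] at this
    exact this
  calc (x - 1/2) * Real.Gamma x ^ 2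
      ≤ (x - 1/2) * (Real.Gamma (x - 1/2) * Real.Gamma (x + 1/2)) := by
        exact mul_le_mul_of_nonneg_left hexp h1.le
    _ = Real.Gamma (x + 1/2) ^ 2 := by rw [hfe]; ring

lemma gamma_ratio_sqrt {x : ℝ} (hx : 1/2 < x) :
    Real.sqrt (x - 1/2) * Real.Gamma x ≤ Real.Gamma (x + 1/2) := by
  have h1 : (0:ℝ) < x - 1/2 := by linarith
  have hG0 := Real.Gamma_pos_of_pos (by linarith : (0:ℝ) < x)
  have hG2 := Real.Gamma_pos_of_pos (by linarith : (0:ℝ) < x + 1/2)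
  have ha : 0 ≤ Real.sqrt (x - 1/2) * Real.Gamma x := by positivity
  have hsq : (Real.sqrt (x - 1/2) * Real.Gamma x) ^ 2 ≤ Real.Gamma (x + 1/2) ^ 2 := by
    rw [mul_pow, Real.sq_sqrt h1.le]; exact gamma_sq_key hx
  calc Real.sqrt (x - 1/2) * Real.Gamma x
      = Real.sqrt ((Real.sqrt (x - 1/2) * Real.Gamma x) ^ 2) := (Real.sqrt_sq ha).symm
    _ ≤ Real.sqrt (Real.Gamma (x + 1/2) ^ 2) := Real.sqrt_le_sqrt hsq
    _ = Real.Gamma (x + 1/2) := Real.sqrt_sq hG2.le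

theorem gamma_ratio_lower (m n : ℕ) (hm : 2 ≤ m) (hmn : m ≤ n) :
    Real.Gamma (((n : ℝ) + 1) / 2) /
        (Real.Gamma ((m : ℝ) / 2) * ((n : ℝ) / 2) ^ (((n : ℝ) - m + 1) / 2)) >
      Real.sqrt (2 * Real.exp (5/6) / 3) * Real.exp (-(((n : ℝ) - m + 1) / 2)) := by
  induction n, hmn using Nat.le_induction with
  | base =>
    have hm2 : (2:ℝ) ≤ (m:ℝ) := by exact_mod_cast hm
    have hmpos : (0:ℝ) < (m:ℝ)/2 := by linarith
    have hG := Real.Gamma_pos_of_pos hmpos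
    have hG1 := Real.Gamma_pos_of_pos (by linarith : (0:ℝ) < ((m:ℝ)+1)/2)
    have hexpo : (((m:ℝ) - m + 1)/2) = 1/2 := by ring
    rw [hexpo]
    have hrp : (0:ℝ) < ((m:ℝ)/2) ^ ((1:ℝ)/2) := Real.rpow_pos_of_pos hmpos _
    have hE : Real.exp (5/6) * Real.exp (-1) < 1 := by
      rw [← Real.exp_add]
      rw [Real.exp_lt_one_iff]
      norm_num
    refine lt_of_pow_lt_pow_left₀ 2
      (le_of_lt (div_pos hG1 (mul_pos hG hrp))) ?_
    have hC2 : (((m:ℝ)/2) ^ ((1:ℝ)/2))^(2:ℕ) = (m:ℝ)/2 := by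
      rw [← Real.rpow_natCast (((m:ℝ)/2) ^ ((1:ℝ)/2)) 2, ← Real.rpow_mul hmpos.le]
      norm_num
    have hsqE : Real.sqrt (2 * Real.exp (5/6) / 3) ^ (2:ℕ) = 2 * Real.exp (5/6) / 3 :=
      Real.sq_sqrt (by positivity)
    have hexpsq : Real.exp (-((1:ℝ)/2)) ^ (2:ℕ) = Real.exp (-1) := by
      rw [sq, ← Real.exp_add]; norm_num
    rw [mul_pow, hsqE, hexpsq, div_pow, mul_pow, hC2]
    rw [lt_div_iff₀ (by positivity)]
    rcases eq_or_lt_of_le hm with h2 | h3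
    · -- m = 2
      have hmval : (m:ℝ) = 2 := by exact_mod_cast h2.symm
      rw [hmval]
      have hg1 : Real.Gamma ((2:ℝ)/2) = 1 := by norm_num [Real.Gamma_one]
      have h32 : Real.Gamma (((2:ℝ)+1)/2) = Real.sqrt π / 2 := by
        have h := Real.Gamma_add_one (by norm_num : (1/2:ℝ) ≠ 0)
        rw [Real.Gamma_one_half_eq] at h
        rw [show ((2:ℝ)+1)/2 = 1/2 + 1 by norm_num, h]
        ring
      rw [hg1, h32]
      have hpi : √π ^ (2:ℕ) = π := Real.sq_sqrt Real.pi_nonneg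
      have : (√π/2)^(2:ℕ) = π/4 := by rw [div_pow, hpi]; norm_num
      rw [this]
      nlinarith [Real.pi_gt_three, hE, Real.exp_pos (5/6:ℝ), Real.exp_pos (-1:ℝ)]
    · -- m ≥ 3
      have hm3 : (3:ℝ) ≤ (m:ℝ) := by exact_mod_cast h3
      have hkey := gamma_sq_key (x := (m:ℝ)/2) (by linarith)
      rw [show (m:ℝ)/2 + 1/2 = ((m:ℝ)+1)/2 by ring] at hkey
      have hGsq : (0:ℝ) < Real.Gamma ((m:ℝ)/2) ^ 2 := by positivity
      nlinarith [hkey, hE, hGsq, hm3,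
        mul_pos (mul_pos (by linarith : (0:ℝ) < 1 - Real.exp (5/6) * Real.exp (-1))
          (by linarith : (0:ℝ) < (m:ℝ)/3)) hGsq,
        mul_nonneg (by linarith : (0:ℝ) ≤ (m:ℝ)/2 - 1/2 - (m:ℝ)/3) hGsq.le]
  | succ n hmn2 ih =>
    have hm2 : (2:ℝ) ≤ (m:ℝ) := by exact_mod_cast hm
    have hnm : (m:ℝ) ≤ (n:ℝ) := by exact_mod_cast hmn2
    have hn2 : (2:ℝ) ≤ (n:ℝ) := le_trans hm2 hnm
    have hn0 : (0:ℝ) < (n:ℝ) := by linarith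
    set t : ℝ := ((n:ℝ) - m + 1)/2 with ht
    have htpos : (0:ℝ) < t := by rw [ht]; linarith
    have htle : t ≤ ((n:ℝ) - 1)/2 := by rw [ht]; linarith
    have hcast : ((n+1 : ℕ):ℝ) = (n:ℝ) + 1 := by push_cast; ring
    have hexpo : (((n+1:ℕ):ℝ) - m + 1)/2 = t + 1/2 := by rw [hcast, ht]; ring
    rw [hexpo, hcast]
    have hG := Real.Gamma_pos_of_pos (by linarith : (0:ℝ) < (m:ℝ)/2)
    have hGn1 := Real.Gamma_pos_of_pos (by linarith : (0:ℝ) < ((n:ℝ)+1)/2)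
    have hGn2 := Real.Gamma_pos_of_pos (by linarith : (0:ℝ) < ((n:ℝ)+1+1)/2)
    have hnhalf : (0:ℝ) < (n:ℝ)/2 := by linarith
    have hn1half : (0:ℝ) < ((n:ℝ)+1)/2 := by linarith
    have hv : (0:ℝ) < ((n:ℝ)/2) ^ t := Real.rpow_pos_of_pos hnhalf _
    have hu : (0:ℝ) < (((n:ℝ)+1)/2) ^ (t + 1/2) := Real.rpow_pos_of_pos hn1half _
    -- core inequality
    have hee : (1:ℝ) + 1/(n:ℝ) ≤ Real.exp (1/(n:ℝ)) := by
      have := Real.add_one_le_exp (1/(n:ℝ)); linarith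
    have hfrac : ((n:ℝ)+1)/(n:ℝ) = 1 + 1/(n:ℝ) := by field_simp
    have hsplit : (((n:ℝ)+1)/2) ^ (t + 1/2) =
        ((n:ℝ)/2) ^ t * (((n:ℝ)+1)/(n:ℝ)) ^ t * (((n:ℝ)+1)/2) ^ ((1:ℝ)/2) := by
      rw [Real.rpow_add hn1half, show ((n:ℝ)+1)/2 = ((n:ℝ)/2) * (((n:ℝ)+1)/(n:ℝ)) by
        field_simp]
      rw [Real.mul_rpow hnhalf.le (by positivity)]
    have hb1 : (((n:ℝ)+1)/(n:ℝ)) ^ t ≤ Real.exp ((1/(n:ℝ)) * t) := by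
      rw [Real.exp_mul]
      exact Real.rpow_le_rpow (by positivity) (by rw [hfrac]; exact hee) htpos.le
    have hb1' : Real.exp ((1/(n:ℝ)) * t) ≤ Real.exp (((n:ℝ)-1)/(2*(n:ℝ))) := by
      apply Real.exp_le_exp.2
      have h := mul_le_mul_of_nonneg_right htle (by positivity : (0:ℝ) ≤ 1/(n:ℝ))
      calc (1/(n:ℝ)) * t = t * (1/(n:ℝ)) := by ring
        _ ≤ (((n:ℝ)-1)/2) * (1/(n:ℝ)) := h
        _ = ((n:ℝ)-1)/(2*(n:ℝ)) := by ring
    have hb2 : (((n:ℝ)+1)/2) ^ ((1:ℝ)/2) ≤ ((n:ℝ)/2) ^ ((1:ℝ)/2) * Real.exp (1/(2*(n:ℝ))) := by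
      have h1 : ((n:ℝ)+1)/2 ≤ ((n:ℝ)/2) * Real.exp (1/(n:ℝ)) := by
        have := mul_le_mul_of_nonneg_left hee hnhalf.le
        calc ((n:ℝ)+1)/2 = ((n:ℝ)/2) * (1 + 1/(n:ℝ)) := by field_simp
          _ ≤ ((n:ℝ)/2) * Real.exp (1/(n:ℝ)) := this
      calc (((n:ℝ)+1)/2) ^ ((1:ℝ)/2) ≤ (((n:ℝ)/2) * Real.exp (1/(n:ℝ))) ^ ((1:ℝ)/2) :=
            Real.rpow_le_rpow (by positivity) h1 (by norm_num)
        _ = ((n:ℝ)/2) ^ ((1:ℝ)/2) * Real.exp (1/(2*(n:ℝ))) := by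
            rw [Real.mul_rpow hnhalf.le (Real.exp_pos _).le, ← Real.exp_mul]
            congr 1
            ring
    have hQ : (((n:ℝ)+1)/(n:ℝ)) ^ t * (((n:ℝ)+1)/2) ^ ((1:ℝ)/2) * Real.exp (-(1/2:ℝ)) ≤
        ((n:ℝ)/2) ^ ((1:ℝ)/2) := by
      have := mul_le_mul (hb1.trans hb1') hb2 (by positivity) (Real.exp_pos _).le
      calc (((n:ℝ)+1)/(n:ℝ)) ^ t * (((n:ℝ)+1)/2) ^ ((1:ℝ)/2) * Real.exp (-(1/2:ℝ))
          ≤ (Real.exp (((n:ℝ)-1)/(2*(n:ℝ))) * (((n:ℝ)/2) ^ ((1:ℝ)/2) * Real.exp (1/(2*(n:ℝ)))))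
              * Real.exp (-(1/2:ℝ)) := by
            apply mul_le_mul_of_nonneg_right this (Real.exp_pos _).le
        _ = ((n:ℝ)/2) ^ ((1:ℝ)/2) *
            Real.exp (((n:ℝ)-1)/(2*(n:ℝ)) + 1/(2*(n:ℝ)) + -(1/2:ℝ)) := by
            rw [Real.exp_add, Real.exp_add]; ring
        _ = ((n:ℝ)/2) ^ ((1:ℝ)/2) := by
            rw [show ((n:ℝ)-1)/(2*(n:ℝ)) + 1/(2*(n:ℝ)) + -(1/2:ℝ) = 0 by
              field_simp; ring, Real.exp_zero, mul_one]
    have hGam : Real.Gamma (((n:ℝ)+1)/2) * ((n:ℝ)/2) ^ ((1:ℝ)/2) ≤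
        Real.Gamma (((n:ℝ)+1+1)/2) := by
      have := gamma_ratio_sqrt (x := ((n:ℝ)+1)/2) (by linarith)
      rw [show ((n:ℝ)+1)/2 - 1/2 = (n:ℝ)/2 by ring,
        show ((n:ℝ)+1)/2 + 1/2 = ((n:ℝ)+1+1)/2 by ring, Real.sqrt_eq_rpow] at this
      linarith [this]
    -- main step inequality
    have hcore : Real.Gamma (((n:ℝ)+1)/2) * Real.exp (-(1/2:ℝ)) * (((n:ℝ)+1)/2) ^ (t + 1/2)
        ≤ Real.Gamma (((n:ℝ)+1+1)/2) * ((n:ℝ)/2) ^ t := by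
      rw [hsplit]
      calc Real.Gamma (((n:ℝ)+1)/2) * Real.exp (-(1/2:ℝ)) *
            (((n:ℝ)/2) ^ t * (((n:ℝ)+1)/(n:ℝ)) ^ t * (((n:ℝ)+1)/2) ^ ((1:ℝ)/2))
          = (Real.Gamma (((n:ℝ)+1)/2) * ((n:ℝ)/2) ^ t) *
            ((((n:ℝ)+1)/(n:ℝ)) ^ t * (((n:ℝ)+1)/2) ^ ((1:ℝ)/2) * Real.exp (-(1/2:ℝ))) := by
            ring
        _ ≤ (Real.Gamma (((n:ℝ)+1)/2) * ((n:ℝ)/2) ^ t) * (((n:ℝ)/2) ^ ((1:ℝ)/2)) := by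
            apply mul_le_mul_of_nonneg_left hQ (by positivity)
        _ = (Real.Gamma (((n:ℝ)+1)/2) * ((n:ℝ)/2) ^ ((1:ℝ)/2)) * ((n:ℝ)/2) ^ t := by ring
        _ ≤ Real.Gamma (((n:ℝ)+1+1)/2) * ((n:ℝ)/2) ^ t := by
            apply mul_le_mul_of_nonneg_right hGam hv.le
    have hstep : Real.Gamma (((n:ℝ)+1)/2) / (Real.Gamma ((m:ℝ)/2) * ((n:ℝ)/2) ^ t) *
        Real.exp (-(1/2:ℝ)) ≤
        Real.Gamma (((n:ℝ)+1+1)/2) / (Real.Gamma ((m:ℝ)/2) * (((n:ℝ)+1)/2) ^ (t + 1/2)) := by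
      rw [div_mul_eq_mul_div, div_le_div_iff₀ (by positivity) (by positivity)]
      calc Real.Gamma (((n:ℝ)+1)/2) * Real.exp (-(1/2:ℝ)) *
            (Real.Gamma ((m:ℝ)/2) * (((n:ℝ)+1)/2) ^ (t + 1/2))
          = (Real.Gamma (((n:ℝ)+1)/2) * Real.exp (-(1/2:ℝ)) * (((n:ℝ)+1)/2) ^ (t + 1/2)) *
            Real.Gamma ((m:ℝ)/2) := by ring
        _ ≤ (Real.Gamma (((n:ℝ)+1+1)/2) * ((n:ℝ)/2) ^ t) * Real.Gamma ((m:ℝ)/2) :=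
            mul_le_mul_of_nonneg_right hcore hG.le
        _ = Real.Gamma (((n:ℝ)+1+1)/2) * (Real.Gamma ((m:ℝ)/2) * ((n:ℝ)/2) ^ t) := by ring
    have hih := mul_lt_mul_of_pos_right ih (Real.exp_pos (-(1/2:ℝ)))
    calc Real.sqrt (2 * Real.exp (5/6) / 3) * Real.exp (-(t + 1/2))
        = Real.sqrt (2 * Real.exp (5/6) / 3) * Real.exp (-t) * Real.exp (-(1/2:ℝ)) := by
          rw [mul_assoc, ← Real.exp_add]; ring_nf
      _ < Real.Gamma (((n:ℝ)+1)/2) / (Real.Gamma ((m:ℝ)/2) * ((n:ℝ)/2) ^ t) *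
          Real.exp (-(1/2:ℝ)) := hih
      _ ≤ Real.Gamma (((n:ℝ)+1+1)/2) / (Real.Gamma ((m:ℝ)/2) * (((n:ℝ)+1)/2) ^ (t + 1/2)) :=
          hstep
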